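/- Let T be a table with suppressed cell set E, total graph H' = (A, B, E'), and suppressed graph H = (A, B, E), and let P ⊆ E' − E. If E is totally protected in the table T̄_P obtained from T by additionally suppressing the cells in P, then the set P' ⊆ P of those edges of P whose two endpoints are mutually reachable in (A, B, E ∪ P) satisfies Property N1 (every connected component of (A, B, E ∪ P') is strongly connected) and Property N2 (for every connected component D of H, all vertices of D lie in a single connected component of (A, B, P')); moreover |P'| ≤ |P|. -/

import Mathlib

/-- A two-dimensional table: values, lower/upper bounds, and a set of suppressed cells. -/
structure Table (R C : Type*) where
  val : R × C → ℝ
  lo : R × C → ℝ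
  hi : R × C → ℝ
  sup : Set (R × C)
  lo_le : ∀ e, lo e ≤ val e
  le_hi : ∀ e, val e ≤ hi e
  lo_lt_hi : ∀ e, lo e < hi e

variable {R C : Type*}

/-- A bounded feasible assignment of a table. -/
def BFA [Fintype R] [Fintype C] (T : Table R C) (x : R × C → ℝ) : Prop :=
  (∀ e, e ∉ T.sup → x e = T.val e) ∧
  (∀ e ∈ T.sup, T.lo e ≤ x e ∧ x e ≤ T.hi e) ∧
  (∀ i : R, ∑ j, x (i, j) = ∑ j, T.val (i, j)) ∧
  (∀ j : C, ∑ i, x (i, j) = ∑ i, T.val (i, j))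

/-- One traversable step in the mixed graph with edge set `S`: the edge of a cell `e`
may be traversed from its row endpoint to its column endpoint iff `val e < hi e`,
and from its column endpoint to its row endpoint iff `lo e < val e`. -/
def MStep (T : Table R C) (S : Set (R × C)) (v w : R ⊕ C) : Prop :=
  ∃ e ∈ S, (T.val e < T.hi e ∧ v = Sum.inl e.1 ∧ w = Sum.inr e.2) ∨
           (T.lo e < T.val e ∧ v = Sum.inr e.2 ∧ w = Sum.inl e.1)

/-- Reachability along traversable paths in the mixed graph with edge set `S`. -/
def MReach (T : Table R C) (S : Set (R × C)) : (R ⊕ C) → (R ⊕ C) → Prop :=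
  Relation.ReflTransGen (MStep T S)

/-- Mutual reachability in the mixed graph with edge set `S`. -/
def MutReach (T : Table R C) (S : Set (R × C)) (v w : R ⊕ C) : Prop :=
  MReach T S v w ∧ MReach T S w v

/-- `D` is a strongly connected component of the mixed graph with edge set `S`:
an equivalence class of mutual reachability. -/
def IsSCC (T : Table R C) (S : Set (R × C)) (D : Set (R ⊕ C)) : Prop :=
  ∃ v, D = {w | MutReach T S v w}

/-- Direction-blind adjacency via an edge in `S`. -/
def Adj (S : Set (R × C)) (v w : R ⊕ C) : Prop :=
  ∃ e ∈ S, (v = Sum.inl e.1 ∧ w = Sum.inr e.2) ∨ (v = Sum.inr e.2 ∧ w = Sum.inl e.1)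

/-- Direction-blind connectivity via edges in `S`. -/
def Conn (S : Set (R × C)) : (R ⊕ C) → (R ⊕ C) → Prop :=
  Relation.ReflTransGen (Adj S)

/-- `D` is a connected component of the (direction-blind) graph with edge set `S`. -/
def IsCC (S : Set (R × C)) (D : Set (R ⊕ C)) : Prop :=
  ∃ v, D = {w | Conn S v w}

/-- The edges of `S` with both endpoints in the vertex set `D`. -/
def EdgesIn (S : Set (R × C)) (D : Set (R ⊕ C)) : Set (R × C) :=
  {e | e ∈ S ∧ Sum.inl e.1 ∈ D ∧ Sum.inr e.2 ∈ D}

/-- All vertices of `D` are joined by direction-blind paths using edges in `S`. -/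
def ConnectedOn (S : Set (R × C)) (D : Set (R ⊕ C)) : Prop :=
  ∀ v ∈ D, ∀ w ∈ D, Conn S v w

/-- `F` is entire: it is the sum of a power series centered at some point with
infinite radius of convergence. -/
def Entire {ι : Type*} [Fintype ι] (F : (ι → ℝ) → ℝ) : Prop :=
  ∃ (p : FormalMultilinearSeries ℝ (ι → ℝ) ℝ) (c : ι → ℝ),
    HasFPowerSeriesOnBall F p c ⊤

/-- `F x` depends only on the coordinates `x e` with `e ∈ S`. -/
def DependsOnlyOn {ι : Type*} (F : (ι → ℝ) → ℝ) (S : Set ι) : Prop :=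
  ∀ x y : ι → ℝ, (∀ e ∈ S, x e = y e) → F x = F y

/-- `S` is the effective area of `F`: the smallest set of coordinates that `F`
depends on. -/
def IsEA {ι : Type*} (F : (ι → ℝ) → ℝ) (S : Set ι) : Prop :=
  DependsOnlyOn F S ∧ ∀ S', DependsOnlyOn F S' → S ⊆ S'

/-- `F` takes the same value at every bounded feasible assignment of `T`. -/
def TableInvariant [Fintype R] [Fintype C] (T : Table R C) (F : (R × C → ℝ) → ℝ) : Prop :=
  ∀ x y, BFA T x → BFA T y → F x = F y

/-- `Q` is totally protected in `T`: there is no nonconstant analytic invariant of `T`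
whose effective area is contained in `Q`. -/
def TotallyProtected [Fintype R] [Fintype C] (T : Table R C) (Q : Set (R × C)) : Prop :=
  ¬ ∃ (F : (R × C → ℝ) → ℝ) (S : Set (R × C)),
      Entire F ∧ DependsOnlyOn F T.sup ∧ TableInvariant T F ∧
      IsEA F S ∧ S ⊆ Q ∧ S.Nonempty

/-- The table obtained from `T` by additionally suppressing the cells in `P`. -/
def Table.addSup (T : Table R C) (P : Set (R × C)) : Table R C :=
  { T with sup := T.sup ∪ P }

open scoped Classical

section Aux

variable {R C : Type*} [Fintype R] [Fintype C]

lemma adj_symm {S : Set (R × C)} {v w : R ⊕ C} (h : Adj S v w) : Adj S w v := by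
  obtain ⟨e, he, h | h⟩ := h
  · exact ⟨e, he, Or.inr ⟨h.2, h.1⟩⟩
  · exact ⟨e, he, Or.inl ⟨h.2, h.1⟩⟩

lemma conn_symm {S : Set (R × C)} {v w : R ⊕ C} (h : Conn S v w) : Conn S w v :=
  by
    unfold Conn at h ⊢
    induction h with
    | refl => exact Relation.ReflTransGen.refl
    | tail _ hab ih => exact Relation.ReflTransGen.head (adj_symm hab) ih

lemma mutReach_symm {T : Table R C} {S : Set (R × C)} {v w : R ⊕ C}
    (h : MutReach T S v w) : MutReach T S w v := ⟨h.2, h.1⟩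

lemma mutReach_trans {T : Table R C} {S : Set (R × C)} {u v w : R ⊕ C}
    (h1 : MutReach T S u v) (h2 : MutReach T S v w) : MutReach T S u w :=
  ⟨Relation.ReflTransGen.trans h1.1 h2.1, Relation.ReflTransGen.trans h2.2 h1.2⟩

lemma cut_identity (T : Table R C) (P : Set (R × C)) (U : Set (R ⊕ C))
    (x : R × C → ℝ) (hx : BFA (T.addSup P) x) :
    ∑ f : R × C, ((if Sum.inl f.1 ∈ U then (1:ℝ) else 0) -
      (if Sum.inr f.2 ∈ U then (1:ℝ) else 0)) * (x f - T.val f) = 0 := by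
  have hrow : ∀ i : R, ∑ j, x (i, j) = ∑ j, T.val (i, j) := hx.2.2.1
  have hcol : ∀ j : C, ∑ i, x (i, j) = ∑ i, T.val (i, j) := hx.2.2.2
  have h1 : ∑ f : R × C, (if Sum.inl f.1 ∈ U then (1:ℝ) else 0) * (x f - T.val f) = 0 := by
    rw [Fintype.sum_prod_type]
    refine Finset.sum_eq_zero fun i _ => ?_
    have : ∑ j, (if Sum.inl i ∈ U then (1:ℝ) else 0) * (x (i, j) - T.val (i, j)) = 0 := by
      rw [← Finset.mul_sum, Finset.sum_sub_distrib, hrow i, sub_self, mul_zero]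
    exact this
  have h2 : ∑ f : R × C, (if Sum.inr f.2 ∈ U then (1:ℝ) else 0) * (x f - T.val f) = 0 := by
    rw [Fintype.sum_prod_type_right]
    refine Finset.sum_eq_zero fun j _ => ?_
    have : ∑ i, (if Sum.inr j ∈ U then (1:ℝ) else 0) * (x (i, j) - T.val (i, j)) = 0 := by
      rw [← Finset.mul_sum, Finset.sum_sub_distrib, hcol j, sub_self, mul_zero]
    exact this
  calc ∑ f : R × C, ((if Sum.inl f.1 ∈ U then (1:ℝ) else 0) -
      (if Sum.inr f.2 ∈ U then (1:ℝ) else 0)) * (x f - T.val f)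
      = ∑ f : R × C, ((if Sum.inl f.1 ∈ U then (1:ℝ) else 0) * (x f - T.val f)
        - (if Sum.inr f.2 ∈ U then (1:ℝ) else 0) * (x f - T.val f)) := by
        refine Finset.sum_congr rfl fun f _ => ?_; ring
    _ = 0 := by rw [Finset.sum_sub_distrib, h1, h2, sub_self]

lemma val_fixed_core (T : Table R C) (P : Set (R × C)) (t : R ⊕ C)
    {x : R × C → ℝ} (hx : BFA (T.addSup P) x) {f0 : R × C} (hf0 : f0 ∈ T.sup ∪ P)
    (hiff : ¬ (MReach T (T.sup ∪ P) (Sum.inl f0.1) t ↔ MReach T (T.sup ∪ P) (Sum.inr f0.2) t)) :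
    x f0 = T.val f0 := by
  set U : Set (R ⊕ C) := {v | MReach T (T.sup ∪ P) v t} with hU
  have key := cut_identity T P U x hx
  have hbound : ∀ e ∈ T.sup ∪ P, T.lo e ≤ x e ∧ x e ≤ T.hi e := hx.2.1
  have hfixv : ∀ e, e ∉ T.sup ∪ P → x e = T.val e := hx.1
  have nonneg : ∀ f ∈ (Finset.univ : Finset (R × C)),
      0 ≤ ((if Sum.inl f.1 ∈ U then (1:ℝ) else 0) -
        (if Sum.inr f.2 ∈ U then (1:ℝ) else 0)) * (x f - T.val f) := by
    intro f _
    by_cases hfG : f ∈ T.sup ∪ P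
    · by_cases h1 : Sum.inl f.1 ∈ U <;> by_cases h2 : Sum.inr f.2 ∈ U
      · simp [h1, h2]
      · have hval : T.val f = T.lo f := by
          by_contra hne
          exact h2 (Relation.ReflTransGen.head
            ⟨f, hfG, Or.inr ⟨lt_of_le_of_ne (T.lo_le f) (Ne.symm hne), rfl, rfl⟩⟩ h1)
        have hge := (hbound f hfG).1
        rw [if_pos h1, if_neg h2]
        have hexp : ((1:ℝ) - 0) * (x f - T.val f) = x f - T.val f := by ring
        rw [hexp, hval]
        linarith
      · have hval : T.val f = T.hi f := by
          by_contra hne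
          exact h1 (Relation.ReflTransGen.head
            ⟨f, hfG, Or.inl ⟨lt_of_le_of_ne (T.le_hi f) hne, rfl, rfl⟩⟩ h2)
        have hle := (hbound f hfG).2
        rw [if_neg h1, if_pos h2]
        have hexp : ((0:ℝ) - 1) * (x f - T.val f) = T.val f - x f := by ring
        rw [hexp, hval]
        linarith
      · simp [h1, h2]
    · rw [hfixv f hfG]; simp
  have hall := (Finset.sum_eq_zero_iff_of_nonneg nonneg).mp key f0 (Finset.mem_univ _)
  have hc : ((if Sum.inl f0.1 ∈ U then (1:ℝ) else 0) -
      (if Sum.inr f0.2 ∈ U then (1:ℝ) else 0)) ≠ 0 := by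
    by_cases h1 : Sum.inl f0.1 ∈ U <;> by_cases h2 : Sum.inr f0.2 ∈ U
    · exact absurd ⟨fun _ => h2, fun _ => h1⟩ hiff
    · rw [if_pos h1, if_neg h2]; norm_num
    · rw [if_neg h1, if_pos h2]; norm_num
    · exact absurd ⟨fun h => absurd h h1, fun h => absurd h h2⟩ hiff
  rcases mul_eq_zero.mp hall with h | h
  · exact absurd h hc
  · linarith [h]

lemma val_fixed (T : Table R C) (P : Set (R × C)) {f0 : R × C} (hf0 : f0 ∈ T.sup ∪ P)
    (h : ¬ MutReach T (T.sup ∪ P) (Sum.inl f0.1) (Sum.inr f0.2))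
    {x : R × C → ℝ} (hx : BFA (T.addSup P) x) : x f0 = T.val f0 := by
  unfold MutReach at h
  rcases not_and_or.mp h with h | h
  · exact val_fixed_core T P (Sum.inr f0.2) hx hf0
      (fun hiff => h (hiff.mpr Relation.ReflTransGen.refl))
  · exact val_fixed_core T P (Sum.inl f0.1) hx hf0
      (fun hiff => h (hiff.mp Relation.ReflTransGen.refl))

lemma protected_contra (T : Table R C) (P : Set (R × C))
    (hTP : TotallyProtected (T.addSup P) T.sup)
    (c : R × C → ℝ) (hsupp : ∀ f, c f ≠ 0 → f ∈ T.sup) {f0 : R × C} (hf0 : c f0 ≠ 0)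
    (hinv : ∀ x y, BFA (T.addSup P) x → BFA (T.addSup P) y →
      ∑ f : R × C, c f * x f = ∑ f : R × C, c f * y f) : False := by
  apply hTP
  set L : ((R × C) → ℝ) →L[ℝ] ℝ :=
    ∑ f : R × C, c f • (ContinuousLinearMap.proj f : ((R × C) → ℝ) →L[ℝ] ℝ) with hLdef
  have hLapp : ∀ x : R × C → ℝ, L x = ∑ f : R × C, c f * x f := by
    intro x
    rw [hLdef]
    simp [ContinuousLinearMap.sum_apply, ContinuousLinearMap.smul_apply,
      ContinuousLinearMap.proj_apply, smul_eq_mul]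
  refine ⟨⇑L, {f | c f ≠ 0}, ⟨L.fpowerSeries 0, 0, L.hasFPowerSeriesOnBall 0⟩,
    ?_, ?_, ⟨?_, ?_⟩, fun f hf => hsupp f hf, ⟨f0, hf0⟩⟩
  · intro x y hxy
    rw [hLapp, hLapp]
    refine Finset.sum_congr rfl fun f _ => ?_
    by_cases hcf : c f = 0
    · simp [hcf]
    · rw [hxy f (Set.mem_union_left _ (hsupp f hcf))]
  · intro x y hx hy
    rw [hLapp, hLapp]; exact hinv x y hx hy
  · intro x y hxy
    rw [hLapp, hLapp]
    refine Finset.sum_congr rfl fun f _ => ?_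
    by_cases hcf : c f = 0
    · simp [hcf]
    · rw [hxy f hcf]
  · intro S' hS' f hf
    by_contra hfS'
    have h0 := hS' (fun _ => 0) (fun g => if g = f then 1 else 0) ?_
    · rw [hLapp, hLapp] at h0
      simp only [mul_zero, Finset.sum_const_zero, mul_ite, mul_one] at h0
      rw [Finset.sum_ite_eq' Finset.univ f c] at h0
      simp only [Finset.mem_univ, if_true] at h0
      exact hf h0.symm
    · intro g hg
      have hgf : g ≠ f := fun h => hfS' (h ▸ hg)
      simp [hgf]

lemma sup_mutReach (T : Table R C) (P : Set (R × C))
    (hTP : TotallyProtected (T.addSup P) T.sup) {e : R × C} (he : e ∈ T.sup) :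
    MutReach T (T.sup ∪ P) (Sum.inl e.1) (Sum.inr e.2) := by
  by_contra h
  refine protected_contra T P hTP (fun f => if f = e then 1 else 0) ?_ (f0 := e) (by simp) ?_
  · intro f hf
    by_cases hfe : f = e
    · exact hfe ▸ he
    · simp [hfe] at hf
  · intro x y hx hy
    have hsum : ∀ z : R × C → ℝ,
        ∑ f : R × C, (if f = e then (1:ℝ) else 0) * z f = z e := by
      intro z
      rw [Finset.sum_congr rfl (fun f _ => by rw [ite_mul, one_mul, zero_mul]),
        Finset.sum_ite_eq' Finset.univ e z, if_pos (Finset.mem_univ e)]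
    rw [hsum, hsum, val_fixed T P (Set.mem_union_left _ he) h hx,
      val_fixed T P (Set.mem_union_left _ he) h hy]

lemma mreach_shrink (T : Table R C) (P P' : Set (R × C))
    (hP' : P' = {e | e ∈ P ∧ MutReach T (T.sup ∪ P) (Sum.inl e.1) (Sum.inr e.2)})
    {v w : R ⊕ C} (h1 : MReach T (T.sup ∪ P) v w) (h2 : MReach T (T.sup ∪ P) w v) :
    MReach T (T.sup ∪ P') v w := by
  revert h2
  induction h1 with
  | refl => intro _; exact Relation.ReflTransGen.refl
  | @tail b d p s ih =>
    intro h2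
    have hsd : MReach T (T.sup ∪ P) b d := Relation.ReflTransGen.single s
    have hbv : MReach T (T.sup ∪ P) b v := Relation.ReflTransGen.trans hsd h2
    refine Relation.ReflTransGen.tail (ih hbv) ?_
    obtain ⟨f, hfG, hor⟩ := s
    rcases hfG with hfs | hfp
    · exact ⟨f, Or.inl hfs, hor⟩
    · have hdb : MReach T (T.sup ∪ P) d b := Relation.ReflTransGen.trans h2 p
      have hmut : MutReach T (T.sup ∪ P) (Sum.inl f.1) (Sum.inr f.2) := by
        rcases hor with ⟨_, hb, hd⟩ | ⟨_, hb, hd⟩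
        · subst hb; subst hd; exact ⟨hsd, hdb⟩
        · subst hb; subst hd; exact ⟨hdb, hsd⟩
      exact ⟨f, Or.inr (by rw [hP']; exact ⟨hfp, hmut⟩), hor⟩

lemma sup_connP' (T : Table R C) (P P' : Set (R × C))
    (hP' : P' = {e | e ∈ P ∧ MutReach T (T.sup ∪ P) (Sum.inl e.1) (Sum.inr e.2)})
    (hTP : TotallyProtected (T.addSup P) T.sup)
    {e : R × C} (he : e ∈ T.sup) :
    Conn P' (Sum.inl e.1) (Sum.inr e.2) := by
  by_contra hcon
  set U : Set (R ⊕ C) := {u | Conn P' (Sum.inl e.1) u} with hU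
  have hclosed : ∀ f ∈ P', ((Sum.inl f.1 ∈ U) ↔ (Sum.inr f.2 ∈ U)) := by
    intro f hf
    constructor
    · intro h; exact Relation.ReflTransGen.tail h ⟨f, hf, Or.inl ⟨rfl, rfl⟩⟩
    · intro h; exact Relation.ReflTransGen.tail h ⟨f, hf, Or.inr ⟨rfl, rfl⟩⟩
  set c : R × C → ℝ := fun f => if f ∈ T.sup then
      ((if Sum.inl f.1 ∈ U then (1:ℝ) else 0) -
       (if Sum.inr f.2 ∈ U then (1:ℝ) else 0)) else 0 with hcdef
  refine protected_contra T P hTP c ?_ (f0 := e) ?_ ?_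
  · intro f hf
    by_cases h : f ∈ T.sup
    · exact h
    · exfalso; apply hf; rw [hcdef]; simp [h]
  · have h1 : Sum.inl e.1 ∈ U := Relation.ReflTransGen.refl
    have h2 : Sum.inr e.2 ∉ U := hcon
    rw [hcdef]
    simp only [if_pos he, if_pos h1, if_neg h2]
    norm_num
  · intro x y hx hy
    have main : ∀ z, BFA (T.addSup P) z →
        ∑ f : R × C, c f * z f = ∑ f : R × C, c f * T.val f := by
      intro z hz
      have key := cut_identity T P U z hz
      have hpt : ∀ f : R × C, c f * (z f - T.val f) =
          ((if Sum.inl f.1 ∈ U then (1:ℝ) else 0) -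
           (if Sum.inr f.2 ∈ U then (1:ℝ) else 0)) * (z f - T.val f) := by
        intro f
        by_cases hfs : f ∈ T.sup
        · rw [hcdef]; simp only [if_pos hfs]
        · rw [hcdef]; simp only [if_neg hfs, zero_mul]
          by_cases hfp : f ∈ P
          · by_cases hfp' : f ∈ P'
            · rcases em (Sum.inl f.1 ∈ U) with h1 | h1
              · have h2 := (hclosed f hfp').mp h1
                rw [if_pos h1, if_pos h2, sub_self, zero_mul]
              · have h2 : Sum.inr f.2 ∉ U := fun h => h1 ((hclosed f hfp').mpr h)
                rw [if_neg h1, if_neg h2, sub_self, zero_mul]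
            · have hnm : ¬ MutReach T (T.sup ∪ P) (Sum.inl f.1) (Sum.inr f.2) := by
                intro hm; exact hfp' (by rw [hP']; exact ⟨hfp, hm⟩)
              rw [val_fixed T P (Set.mem_union_right _ hfp) hnm hz, sub_self, mul_zero]
          · have hnG : f ∉ T.sup ∪ P := fun h => h.elim hfs hfp
            have hzv : z f = T.val f := hz.1 f hnG
            rw [hzv, sub_self, mul_zero]
      have hz0 : ∑ f : R × C, c f * (z f - T.val f) = 0 := by
        rw [Finset.sum_congr rfl fun f _ => hpt f]; exact key
      have hexpand : ∑ f : R × C, c f * (z f - T.val f)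
          = ∑ f : R × C, c f * z f - ∑ f : R × C, c f * T.val f := by
        rw [← Finset.sum_sub_distrib]
        refine Finset.sum_congr rfl fun f _ => ?_; ring
      linarith [hz0, hexpand.symm.trans hz0]
    rw [main x hx, main y hy]

end Aux

/-- If `E` is totally protected after also suppressing `P`, then the subset `P'` of
`P` consisting of the edges whose endpoints are mutually reachable in the mixed graph
with edge set `E ∪ P` satisfies Properties N1 and N2, and `|P'| ≤ |P|`. -/
theorem stmt10 [Fintype R] [Fintype C] [Nonempty R] [Nonempty C]
    (T : Table R C) (P : Set (R × C)) (hP : ∀ e ∈ P, e ∉ T.sup)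
    (hTP : TotallyProtected (T.addSup P) T.sup)
    (P' : Set (R × C))
    (hP' : P' = {e | e ∈ P ∧ MutReach T (T.sup ∪ P) (Sum.inl e.1) (Sum.inr e.2)}) :
    (∀ D : Set (R ⊕ C), IsCC (T.sup ∪ P') D →
      ∀ v ∈ D, ∀ w ∈ D, MutReach T (T.sup ∪ P') v w) ∧
    (∀ D : Set (R ⊕ C), IsCC T.sup D → ∀ v ∈ D, ∀ w ∈ D, Conn P' v w) ∧
    P'.ncard ≤ P.ncard := by
  refine ⟨?_, ?_, ?_⟩
  · intro D hD v hv w hw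
    obtain ⟨v0, rfl⟩ := hD
    have hconn : Conn (T.sup ∪ P') v w :=
      Relation.ReflTransGen.trans (conn_symm hv) hw
    clear hv hw
    have hm : MutReach T (T.sup ∪ P) v w := by
      induction hconn with
      | refl => exact ⟨Relation.ReflTransGen.refl, Relation.ReflTransGen.refl⟩
      | @tail b d p a ih =>
        refine mutReach_trans ih ?_
        obtain ⟨f, hf, hor⟩ := a
        have hmf : MutReach T (T.sup ∪ P) (Sum.inl f.1) (Sum.inr f.2) := by
          rcases hf with hf | hf
          · exact sup_mutReach T P hTP hf
          · rw [hP'] at hf; exact hf.2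
        rcases hor with ⟨hb, hd⟩ | ⟨hb, hd⟩ <;> subst hb <;> subst hd
        · exact hmf
        · exact mutReach_symm hmf
    exact ⟨mreach_shrink T P P' hP' hm.1 hm.2, mreach_shrink T P P' hP' hm.2 hm.1⟩
  · intro D hD v hv w hw
    obtain ⟨v0, rfl⟩ := hD
    have hconn : Conn T.sup v w :=
      Relation.ReflTransGen.trans (conn_symm hv) hw
    clear hv hw
    induction hconn with
    | refl => exact Relation.ReflTransGen.refl
    | @tail b d p a ih =>
      obtain ⟨f, hf, hor⟩ := a
      have hcf : Conn P' (Sum.inl f.1) (Sum.inr f.2) := sup_connP' T P P' hP' hTP hf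
      rcases hor with ⟨hb, hd⟩ | ⟨hb, hd⟩ <;> subst hb <;> subst hd
      · exact Relation.ReflTransGen.trans ih hcf
      · exact Relation.ReflTransGen.trans ih (conn_symm hcf)
  · refine Set.ncard_le_ncard ?_ (Set.toFinite P)
    rw [hP']; intro f hf; exact hf.1
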